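/- On ℂ^{m+n} with s(z) = (∏_{i=1}^m z_i)/(∏_{i=m+1}^{m+n} z_i) and f = Re(s), with V the gradient direction field of f scaled as V = Re( (∑_{i=1}^m (z_i/|z_i|²)∂/∂z_i − ∑_{i=m+1}^{m+n} (z_i/|z_i|²)∂/∂z_i )/( s · ∑_{i=1}^{m+n} 1/|z_i|² ) ), the functions ρ_{ij} = |z_i|² − |z_j|² for 1 ≤ i,j ≤ m or m+1 ≤ i,j ≤ m+n, and ρ_{ij} = |z_i|² + |z_j|² for 1 ≤ i ≤ m, m+1 ≤ j ≤ m+n, are all invariant under the flow of V. -/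

import Mathlib

/-- The meromorphic function `s(z) = (∏_{i<m} z_i)/(∏_{m ≤ i} z_i)` on `ℂ^{m+n}`. -/
noncomputable def sFun (m n : ℕ) (z : Fin (m + n) → ℂ) : ℂ :=
  (∏ i : Fin (m + n), if (i : ℕ) < m then z i else 1) / (∏ i : Fin (m + n), if (i : ℕ) < m then 1 else z i)

/-- The rescaled gradient direction field
`V = Re((∑_{i<m} (z_i/|z_i|²)∂_i − ∑_{m≤i} (z_i/|z_i|²)∂_i)/(s ∑ᵢ 1/|z_i|²))`,
given by its complex components. -/
noncomputable def Vfield (m n : ℕ) (z : Fin (m + n) → ℂ) : Fin (m + n) → ℂ := fun i =>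
  ((if (i : ℕ) < m then 1 else -1) * (z i / (Complex.normSq (z i) : ℂ))) /
    (sFun m n z * ∑ j, ((Complex.normSq (z j) : ℂ))⁻¹)

section Aux

variable {m n : ℕ}

/-- Derivative of `w ↦ |w i|²`. -/
lemma hasFDerivAt_normSq_comp (z : Fin (m + n) → ℂ) (i : Fin (m + n)) :
    HasFDerivAt (fun w : Fin (m + n) → ℂ => Complex.normSq (w i))
      (((z i).re • (Complex.reCLM.comp (ContinuousLinearMap.proj (R := ℝ) i)) +
        (z i).re • (Complex.reCLM.comp (ContinuousLinearMap.proj (R := ℝ) i))) +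
       ((z i).im • (Complex.imCLM.comp (ContinuousLinearMap.proj (R := ℝ) i)) +
        (z i).im • (Complex.imCLM.comp (ContinuousLinearMap.proj (R := ℝ) i)))) z := by
  have hre := (Complex.reCLM.comp (ContinuousLinearMap.proj (R := ℝ)
    (φ := fun _ : Fin (m + n) => ℂ) i)).hasFDerivAt (x := z)
  have him := (Complex.imCLM.comp (ContinuousLinearMap.proj (R := ℝ)
    (φ := fun _ : Fin (m + n) => ℂ) i)).hasFDerivAt (x := z)
  have h := (hre.mul hre).add (him.mul him)
  exact h

lemma deriv_normSq_apply (z : Fin (m + n) → ℂ) (hz : ∀ i, z i ≠ 0) (i : Fin (m + n)) :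
    (fderiv ℝ (fun w : Fin (m + n) → ℂ => Complex.normSq (w i)) z) (Vfield m n z)
      = 2 * (if (i : ℕ) < m then (1 : ℝ) else -1) *
        ((sFun m n z * ∑ j, ((Complex.normSq (z j) : ℂ))⁻¹)⁻¹).re := by
  rw [(hasFDerivAt_normSq_comp z i).fderiv]
  have hcz : (starRingEnd ℂ) (z i) ≠ 0 := by simpa using hz i
  have hz' : z i / (Complex.normSq (z i) : ℂ) = ((starRingEnd ℂ) (z i))⁻¹ := by
    rw [← Complex.mul_conj]
    rw [← div_div, div_self (hz i), one_div]
  have hconj : (starRingEnd ℂ) (z i) * Vfield m n z i =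
      (if (i : ℕ) < m then (1 : ℂ) else -1) *
        (sFun m n z * ∑ j, ((Complex.normSq (z j) : ℂ))⁻¹)⁻¹ := by
    unfold Vfield
    rw [hz']
    set D := sFun m n z * ∑ j, ((Complex.normSq (z j) : ℂ))⁻¹ with hD
    set e : ℂ := if (i : ℕ) < m then (1 : ℂ) else -1 with he
    calc (starRingEnd ℂ) (z i) * (e * ((starRingEnd ℂ) (z i))⁻¹ / D)
        = ((starRingEnd ℂ) (z i) * ((starRingEnd ℂ) (z i))⁻¹) * (e * D⁻¹) := by
          rw [div_eq_mul_inv]; ring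
      _ = e * D⁻¹ := by rw [mul_inv_cancel₀ hcz, one_mul]
  have hre : (z i).re * (Vfield m n z i).re + (z i).im * (Vfield m n z i).im
      = ((starRingEnd ℂ) (z i) * Vfield m n z i).re := by
    simp only [Complex.mul_re, Complex.conj_re, Complex.conj_im]; ring
  simp only [ContinuousLinearMap.add_apply, ContinuousLinearMap.smul_apply,
    ContinuousLinearMap.comp_apply, ContinuousLinearMap.proj_apply,
    Complex.reCLM_apply, Complex.imCLM_apply, smul_eq_mul]
  have h2 : (z i).re * (Vfield m n z i).re + (z i).re * (Vfield m n z i).re +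
      ((z i).im * (Vfield m n z i).im + (z i).im * (Vfield m n z i).im)
      = 2 * (((starRingEnd ℂ) (z i) * Vfield m n z i).re) := by rw [← hre]; ring
  rw [h2, hconj]
  by_cases h : (i : ℕ) < m
  · rw [if_pos h, if_pos h, one_mul, mul_one]
  · rw [if_neg h, if_neg h]
    simp only [Complex.mul_re, Complex.neg_re, Complex.one_re, Complex.neg_im,
      Complex.one_im]
    ring

end Aux

/-- the functions `ρ_{ij} = |z_i|² − |z_j|²` (for `i, j` both in the first
group or both in the second) and `ρ_{ij} = |z_i|² + |z_j|²` (for `i` in the first,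
`j` in the second group) are invariant under the flow of `V`. -/
theorem stmt_5 (m n : ℕ) (z : Fin (m + n) → ℂ) (hz : ∀ i, z i ≠ 0)
    (hs : sFun m n z ≠ 0) :
    (∀ i j : Fin (m + n),
      (((i : ℕ) < m ∧ (j : ℕ) < m) ∨ (m ≤ (i : ℕ) ∧ m ≤ (j : ℕ))) →
      fderiv ℝ (fun w : Fin (m + n) → ℂ => Complex.normSq (w i) - Complex.normSq (w j)) z
        (Vfield m n z) = 0) ∧
    (∀ i j : Fin (m + n), (i : ℕ) < m → m ≤ (j : ℕ) →
      fderiv ℝ (fun w : Fin (m + n) → ℂ => Complex.normSq (w i) + Complex.normSq (w j)) z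
        (Vfield m n z) = 0) := by
  constructor
  · intro i j hij
    rw [((hasFDerivAt_normSq_comp z i).fun_sub (hasFDerivAt_normSq_comp z j)).fderiv,
      ContinuousLinearMap.sub_apply]
    have hi := deriv_normSq_apply z hz i
    have hj := deriv_normSq_apply z hz j
    rw [(hasFDerivAt_normSq_comp z i).fderiv] at hi
    rw [(hasFDerivAt_normSq_comp z j).fderiv] at hj
    rw [hi, hj]
    rcases hij with ⟨h1, h2⟩ | ⟨h1, h2⟩
    · rw [if_pos h1, if_pos h2]; ring
    · rw [if_neg (Nat.not_lt.mpr h1), if_neg (Nat.not_lt.mpr h2)]; ring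
  · intro i j hi' hj'
    rw [((hasFDerivAt_normSq_comp z i).fun_add (hasFDerivAt_normSq_comp z j)).fderiv,
      ContinuousLinearMap.add_apply]
    have hi := deriv_normSq_apply z hz i
    have hj := deriv_normSq_apply z hz j
    rw [(hasFDerivAt_normSq_comp z i).fderiv] at hi
    rw [(hasFDerivAt_normSq_comp z j).fderiv] at hj
    rw [hi, hj, if_pos hi', if_neg (Nat.not_lt.mpr hj')]
    ring
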